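/- Consider positive reals {τ_n}, {χ_n} and the counting processes A(t) = #{k : t_k ≤ t}, D(t) = #{k : x_k ≤ t}, where t_k = τ_1 + ⋯ + τ_k and x_k = χ_1 + ⋯ + χ_k. Let Q_1 be the queue-length of the system with autonomous service (Q_1(t) = A(t) - ∫_0^t 1{Q_1(s-) > 0} dD(s)) and let Q_3 be the queue-length of the delayed-departure system defined by (3.1) of the paper. Then for every t ≥ 0 and every sample path, 0 ≤ Q_3(t) - Q_1(t) ≤ 1. -/

import Mathlib

open Filter Set Function Topology

lemma aux_leftLim_not_exists {f : ℝ → ℝ} {a : ℝ}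
    (h : ¬∃ y, Tendsto f (𝓝[<] a) (𝓝 y)) : leftLim f a = f a := by
  have e := (inferInstance : OrderTopology ℝ).topology_eq_generate_intervals
  rw [e] at h
  simp [leftLim, h]
  exact fun _ y hy => absurd ⟨y, by rw [e] at hy; exact hy⟩ h

lemma aux_leftLim_const {f : ℝ → ℝ} {x c a : ℝ} (ha : a < x)
    (h : ∀ s, a < s → s < x → f s = c) : leftLim f x = c := by
  apply leftLim_eq_of_tendsto
  have he : f =ᶠ[𝓝[<] x] (fun _ => c) := by
    filter_upwards [Ioo_mem_nhdsLT_of_mem (⟨ha, le_refl x⟩ : x ∈ Ioc a x)] with s hs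
    exact h s hs.1 hs.2
  exact Tendsto.congr' he.symm tendsto_const_nhds

/-- number of elements of `C` below `n` -/
noncomputable def prefCount (C : Set ℕ) (n : ℕ) : ℕ := ({j | j < n ∧ j ∈ C}).ncard

lemma prefCount_finite (C : Set ℕ) (n : ℕ) : {j | j < n ∧ j ∈ C}.Finite :=
  (Set.finite_lt_nat n).subset fun _ hj => hj.1

lemma prefCount_zero (C : Set ℕ) : prefCount C 0 = 0 := by
  simp [prefCount]

open Classical in
lemma prefCount_succ (C : Set ℕ) (n : ℕ) :
    prefCount C (n + 1) = prefCount C n + (if n ∈ C then 1 else 0) := by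
  by_cases h : n ∈ C
  · rw [if_pos h]
    have hs : {j | j < n + 1 ∧ j ∈ C} = insert n {j | j < n ∧ j ∈ C} := by
      ext j
      simp only [Set.mem_setOf_eq, Set.mem_insert_iff]
      constructor
      · rintro ⟨h1, h2⟩
        rcases Nat.lt_succ_iff_lt_or_eq.mp h1 with h' | h'
        · exact Or.inr ⟨h', h2⟩
        · exact Or.inl h'
      · rintro (rfl | ⟨h1, h2⟩)
        · exact ⟨Nat.lt_succ_self j, h⟩
        · exact ⟨Nat.lt_succ_of_lt h1, h2⟩
    rw [prefCount, prefCount, hs,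
      Set.ncard_insert_of_notMem (fun h' => lt_irrefl n h'.1) (prefCount_finite C n)]
  · rw [if_neg h, Nat.add_zero]
    unfold prefCount
    congr 1
    ext j
    simp only [Set.mem_setOf_eq, Nat.lt_succ_iff_lt_or_eq]
    constructor
    · rintro ⟨h1 | rfl, h2⟩
      · exact ⟨h1, h2⟩
      · exact absurd h2 h
    · rintro ⟨h1, h2⟩
      exact ⟨Or.inl h1, h2⟩

lemma prefCount_mono (C : Set ℕ) : Monotone (prefCount C) := fun m n hmn =>
  Set.ncard_le_ncard (fun j hj => ⟨lt_of_lt_of_le hj.1 hmn, hj.2⟩) (prefCount_finite C n)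

lemma prefCount_le (C : Set ℕ) (hC : C.Finite) (n : ℕ) : prefCount C n ≤ C.ncard :=
  Set.ncard_le_ncard (fun j hj => hj.2) hC

lemma prefCount_eventually (C : Set ℕ) (hC : C.Finite) :
    ∃ N, ∀ n, N ≤ n → prefCount C n = C.ncard := by
  obtain ⟨B, hB⟩ := hC.bddAbove
  refine ⟨B + 1, fun n hn => ?_⟩
  unfold prefCount
  congr 1
  ext j
  simp only [Set.mem_setOf_eq, and_iff_right_iff_imp]
  intro hj
  exact lt_of_le_of_lt (hB hj) (lt_of_lt_of_le (Nat.lt_succ_self B) hn)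

lemma prefCount_unbounded (C : Set ℕ) (hC : C.Infinite) (N : ℕ) :
    ∃ n, N ≤ prefCount C n := by
  obtain ⟨F, hFsub, hFcard⟩ := hC.exists_subset_card_eq N
  refine ⟨F.sup id + 1, ?_⟩
  have hsub : (F : Set ℕ) ⊆ {j | j < F.sup id + 1 ∧ j ∈ C} := fun j hj =>
    ⟨Nat.lt_succ_of_le (Finset.le_sup (f := id) hj), hFsub hj⟩
  calc N = (F : Set ℕ).ncard := by rw [Set.ncard_coe_finset, hFcard]
  _ ≤ _ := Set.ncard_le_ncard hsub (prefCount_finite _ _)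

lemma natCard_eq_prefCount {S : Set ℕ} (C : Set ℕ) (n : ℕ)
    (h : S = {j | j < n ∧ j ∈ C}) : Nat.card S = prefCount C n := by
  rw [h, Nat.card_coe_set_eq, prefCount]

/-- Proposition 2: `0 ≤ Q₃(t) − Q₁(t) ≤ 1` pathwise, where `Q₁` is the
autonomous-service queue and `Q₃` the delayed-departure queue. -/
theorem stmt_7 (τ χ : ℕ → ℝ) (hτ : ∀ n, 0 < τ n) (hχ : ∀ n, 0 < χ n)
    (tA xD : ℕ → ℝ)
    (htA : ∀ k, tA k = ∑ i ∈ Finset.range (k + 1), τ i)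
    (hxD : ∀ k, xD k = ∑ i ∈ Finset.range (k + 1), χ i)
    (A : ℝ → ℕ) (hA : ∀ t, A t = Nat.card {k | tA k ≤ t})
    (Q1 Q3 : ℝ → ℝ)
    (hQ1 : ∀ t, Q1 t = (A t : ℝ) -
      (Nat.card {k | xD k ≤ t ∧ 0 < leftLim Q1 (xD k)} : ℝ))
    (hQ3 : ∀ t, Q3 t = (A t : ℝ) -
      (Nat.card {k | xD k ≤ t ∧ 0 < leftLim Q3 (xD k) ∧
        ¬ ∃ i, Q3 (tA i) = 1 ∧ tA i ≤ xD k ∧ ∀ k' < k, xD k' < tA i} : ℝ)) :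
    ∀ t ≥ (0:ℝ), 0 ≤ Q3 t - Q1 t ∧ Q3 t - Q1 t ≤ 1 := by
  classical
  -- monotonicity and positivity of the event times
  have htmono : StrictMono tA := strictMono_nat_of_lt_succ (fun n => by
    rw [htA n, htA (n+1), Finset.sum_range_succ τ (n+1)]
    exact lt_add_of_pos_right _ (hτ _))
  have hxmono : StrictMono xD := strictMono_nat_of_lt_succ (fun n => by
    rw [hxD n, hxD (n+1), Finset.sum_range_succ χ (n+1)]
    exact lt_add_of_pos_right _ (hχ _))
  have htpos : ∀ i, 0 < tA i := fun i => by
    rw [htA i]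
    exact Finset.sum_pos (fun j _ => hτ j) ⟨0, by simp⟩
  have hxpos : ∀ i, 0 < xD i := fun i => by
    rw [hxD i]
    exact Finset.sum_pos (fun j _ => hχ j) ⟨0, by simp⟩
  -- the departure-decision sets
  set C1 : Set ℕ := {k | 0 < leftLim Q1 (xD k)} with hC1def
  set C3 : Set ℕ := {k | 0 < leftLim Q3 (xD k) ∧
      ¬ ∃ i, Q3 (tA i) = 1 ∧ tA i ≤ xD k ∧ ∀ k' < k, xD k' < tA i} with hC3def
  have hmemC1 : ∀ k, k ∈ C1 ↔ 0 < leftLim Q1 (xD k) := fun k => Iff.rfl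
  have hmemC3 : ∀ k, k ∈ C3 ↔ (0 < leftLim Q3 (xD k) ∧
      ¬ ∃ i, Q3 (tA i) = 1 ∧ tA i ≤ xD k ∧ ∀ k' < k, xD k' < tA i) := fun k => Iff.rfl
  have hQ1' : ∀ s, Q1 s = (A s : ℝ) - (Nat.card {k | xD k ≤ s ∧ k ∈ C1} : ℝ) := hQ1
  have hQ3' : ∀ s, Q3 s = (A s : ℝ) - (Nat.card {k | xD k ≤ s ∧ k ∈ C3} : ℝ) := hQ3
  -- basic facts about the arrival counter A
  have hAinf : ∀ s, {m | tA m ≤ s}.Infinite → A s = 0 := fun s hs => by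
    rw [hA s]
    exact @Nat.card_eq_zero_of_infinite _ hs.to_subtype
  have hAmono : ∀ s s', s ≤ s' → {m | tA m ≤ s'}.Finite → A s ≤ A s' := by
    intro s s' hss' hfin
    rw [hA s, hA s', Nat.card_coe_set_eq, Nat.card_coe_set_eq]
    exact Set.ncard_le_ncard (fun m hm => le_trans hm hss') hfin
  -- dichotomy: near any point `x`, either `A` is eventually constant on the left,
  -- or `A` tends to infinity on the left of `x`.
  have harr : ∀ x : ℝ, (∃ a, a < x ∧ ∀ s, a < s → s < x → A s = A ((a + x) / 2)) ∨
      (Tendsto (fun s => (A s : ℝ)) (𝓝[<] x) atTop ∧ {m | tA m ≤ x}.Infinite) := by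
    intro x
    by_cases hI : ∃ s₀, s₀ < x ∧ {m | tA m ≤ s₀}.Infinite
    · obtain ⟨s₀, hs₀x, hs₀inf⟩ := hI
      left
      have hz : ∀ s, s₀ < s → s < x → A s = 0 := fun s hs _ =>
        hAinf s (hs₀inf.mono (fun m hm => le_trans hm (le_of_lt hs)))
      refine ⟨s₀, hs₀x, fun s hs1 hs2 => ?_⟩
      rw [hz s hs1 hs2, hz ((s₀ + x) / 2) (by linarith) (by linarith)]
    · push_neg at hI
      by_cases hM : {m | tA m < x}.Finite
      · left
        set F : Finset ℝ := insert (x - 1) (hM.toFinset.image tA) with hF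
        have hFne : F.Nonempty := ⟨x - 1, Finset.mem_insert_self _ _⟩
        set a : ℝ := F.max' hFne with ha
        have hax : a < x := by
          rw [ha]
          apply Finset.max'_lt_iff F hFne |>.mpr
          intro y hy
          rw [hF] at hy
          rcases Finset.mem_insert.mp hy with rfl | hy
          · linarith
          · obtain ⟨m, hm, rfl⟩ := Finset.mem_image.mp hy
            exact hM.mem_toFinset.mp hm
        have hseteq : ∀ s, a < s → s < x → {m | tA m ≤ s} = {m | tA m < x} := by
          intro s hs1 hs2
          ext m
          simp only [Set.mem_setOf_eq]
          constructor
          · intro h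
            exact lt_of_le_of_lt h hs2
          · intro h
            have : tA m ∈ F := by
              rw [hF]
              exact Finset.mem_insert_of_mem
                (Finset.mem_image_of_mem tA (hM.mem_toFinset.mpr h))
            exact le_of_lt (lt_of_le_of_lt (Finset.le_max' F _ this) hs1)
        refine ⟨a, hax, fun s hs1 hs2 => ?_⟩
        rw [hA s, hA ((a + x) / 2), hseteq s hs1 hs2,
          hseteq ((a + x) / 2) (by linarith) (by linarith)]
      · right
        have hM' : {m | tA m < x}.Infinite := hM
        have hall : ∀ m, tA m < x := by
          intro m
          obtain ⟨b, hbM, hmb⟩ := hM'.exists_gt m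
          exact lt_of_le_of_lt (htmono.monotone (le_of_lt hmb)) hbM
        constructor
        · rw [tendsto_atTop]
          intro B
          obtain ⟨n, hn⟩ := exists_nat_ge B
          filter_upwards [Ioo_mem_nhdsLT (hall n)] with s hs
          have hfin : {m | tA m ≤ s}.Finite := hI s hs.2
          have hsub : {j | j < n + 1} ⊆ {m | tA m ≤ s} := by
            intro j hj
            exact le_of_lt (lt_of_le_of_lt (htmono.monotone (Nat.lt_succ_iff.mp hj)) hs.1)
          have hcard : n + 1 ≤ A s := by
            rw [hA s, Nat.card_coe_set_eq]
            have : {j | j < n + 1} = ((Finset.range (n + 1) : Finset ℕ) : Set ℕ) := by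
              ext j; simp
            calc n + 1 = ({j | j < n + 1} : Set ℕ).ncard := by
                  rw [this, Set.ncard_coe_finset, Finset.card_range]
            _ ≤ _ := Set.ncard_le_ncard hsub hfin
          calc B ≤ (n : ℝ) := hn
          _ ≤ ((A s : ℕ) : ℝ) := by exact_mod_cast le_trans (Nat.le_succ n) hcard
        · exact hM'.mono (fun m (hm : tA m < x) => (le_of_lt hm : tA m ≤ x))
  -- below `xD k`, the set of departure points is exactly `range k`
  have hdep : ∀ k : ℕ, ∃ a, a < xD k ∧ ∀ s, a < s → s < xD k → ∀ j, (xD j ≤ s ↔ j < k) := by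
    intro k
    cases k with
    | zero =>
      refine ⟨xD 0 - 1, by linarith, fun s hs1 hs2 j => ?_⟩
      simp only [Nat.not_lt_zero, iff_false, not_le]
      exact lt_of_lt_of_le hs2 (hxmono.monotone (Nat.zero_le j))
    | succ k' =>
      refine ⟨xD k', hxmono (Nat.lt_succ_self k'), fun s hs1 hs2 j => ?_⟩
      constructor
      · intro hj
        by_contra hcon
        exact absurd (le_trans (hxmono.monotone (Nat.not_lt.mp hcon)) hj) (not_le.mpr hs2)
      · intro hj
        exact le_of_lt (lt_of_le_of_lt (hxmono.monotone (Nat.lt_succ_iff.mp hj)) hs1)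
  -- evaluation of Q1 / Q3 at points having exactly the first k departure points below
  have heval : ∀ (Q : ℝ → ℝ) (C : Set ℕ),
      (∀ s, Q s = (A s : ℝ) - (Nat.card {j | xD j ≤ s ∧ j ∈ C} : ℝ)) →
      ∀ (k : ℕ) (s : ℝ), (∀ j, (xD j ≤ s ↔ j < k)) →
      Q s = (A s : ℝ) - (prefCount C k : ℝ) := by
    intro Q C hQ' k s hs
    rw [hQ' s, natCard_eq_prefCount C k (by ext j; simp [hs j])]
  -- key structure of the left limits at departure points
  have hkey : ∀ k : ℕ, (∃ m : ℝ, m < xD k ∧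
      leftLim Q1 (xD k) = (A m : ℝ) - (prefCount C1 k : ℝ) ∧
      leftLim Q3 (xD k) = (A m : ℝ) - (prefCount C3 k : ℝ)) ∨
      (leftLim Q1 (xD k) ≤ 0 ∧ leftLim Q3 (xD k) ≤ 0) := by
    intro k
    obtain ⟨a1, ha1, hdep1⟩ := hdep k
    rcases harr (xD k) with ⟨a2, ha2, hconst⟩ | ⟨htop, hinf⟩
    · left
      set a : ℝ := max a1 a2 with hadef
      have hax : a < xD k := max_lt ha1 ha2
      set mid : ℝ := (a + xD k) / 2 with hmiddef
      have hmid1 : a < mid := by rw [hmiddef]; linarith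
      have hmid2 : mid < xD k := by rw [hmiddef]; linarith
      have hAconst : ∀ s, a < s → s < xD k → A s = A mid := by
        intro s hs1 hs2
        rw [hconst s (lt_of_le_of_lt (le_max_right a1 a2) hs1) hs2,
          hconst mid (lt_of_le_of_lt (le_max_right a1 a2) hmid1) hmid2]
      refine ⟨mid, hmid2, ?_, ?_⟩
      · apply aux_leftLim_const hax
        intro s hs1 hs2
        rw [heval Q1 C1 hQ1' k s (hdep1 s (lt_of_le_of_lt (le_max_left a1 a2) hs1) hs2),
          hAconst s hs1 hs2]
      · apply aux_leftLim_const hax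
        intro s hs1 hs2
        rw [heval Q3 C3 hQ3' k s (hdep1 s (lt_of_le_of_lt (le_max_left a1 a2) hs1) hs2),
          hAconst s hs1 hs2]
    · right
      have hQ1top : Tendsto Q1 (𝓝[<] xD k) atTop := by
        have hev : (fun s => (A s : ℝ) - (prefCount C1 k : ℝ)) =ᶠ[𝓝[<] xD k] Q1 := by
          filter_upwards [Ioo_mem_nhdsLT ha1] with s hs
          exact (heval Q1 C1 hQ1' k s (hdep1 s hs.1 hs.2)).symm
        exact Tendsto.congr' hev (tendsto_atTop_add_const_right _ _ htop)
      have hQ3top : Tendsto Q3 (𝓝[<] xD k) atTop := by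
        have hev : (fun s => (A s : ℝ) - (prefCount C3 k : ℝ)) =ᶠ[𝓝[<] xD k] Q3 := by
          filter_upwards [Ioo_mem_nhdsLT ha1] with s hs
          exact (heval Q3 C3 hQ3' k s (hdep1 s hs.1 hs.2)).symm
        exact Tendsto.congr' hev (tendsto_atTop_add_const_right _ _ htop)
      have hl1 : leftLim Q1 (xD k) = Q1 (xD k) :=
        aux_leftLim_not_exists (fun ⟨y, hy⟩ => not_tendsto_nhds_of_tendsto_atTop hQ1top y hy)
      have hl3 : leftLim Q3 (xD k) = Q3 (xD k) :=
        aux_leftLim_not_exists (fun ⟨y, hy⟩ => not_tendsto_nhds_of_tendsto_atTop hQ3top y hy)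
      have hA0 : A (xD k) = 0 := hAinf _ hinf
      constructor
      · have hnn : (0:ℝ) ≤ (Nat.card {j | xD j ≤ xD k ∧ j ∈ C1} : ℝ) := Nat.cast_nonneg _
        rw [hl1, hQ1' (xD k), hA0]
        push_cast
        linarith
      · have hnn : (0:ℝ) ≤ (Nat.card {j | xD j ≤ xD k ∧ j ∈ C3} : ℝ) := Nat.cast_nonneg _
        rw [hl3, hQ3' (xD k), hA0]
        push_cast
        linarith
  -- nonnegativity: the number of actual departures is at most the number of arrivals
  have hL1 : ∀ (k : ℕ) (s : ℝ), {m | tA m ≤ s}.Finite → (∀ j, j < k → xD j ≤ s) →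
      s < xD k → prefCount C1 k ≤ A s := by
    intro k
    induction k with
    | zero => intro s _ _ _; simp [prefCount_zero]
    | succ k IH =>
      intro s hsfin hj hsx
      have hxks : xD k ≤ s := hj k (Nat.lt_succ_self k)
      obtain ⟨a, halt, haj⟩ : ∃ a, a < xD k ∧ ∀ j, j < k → xD j ≤ a := by
        cases k with
        | zero => exact ⟨xD 0 - 1, by linarith [hxpos 0], fun j hj' => absurd hj' (Nat.not_lt_zero j)⟩
        | succ k' => exact ⟨xD k', hxmono (Nat.lt_succ_self k'),
            fun j hj' => hxmono.monotone (Nat.lt_succ_iff.mp hj')⟩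
      set s' : ℝ := (a + xD k) / 2 with hs'def
      have hs'1 : a < s' := by rw [hs'def]; linarith
      have hs'2 : s' < xD k := by rw [hs'def]; linarith
      have hs's : s' < s := lt_of_lt_of_le hs'2 hxks
      have hfin' : {m | tA m ≤ s'}.Finite :=
        hsfin.subset (fun m hm => le_trans hm (le_of_lt hs's))
      have hIH := IH s' hfin' (fun j hjk => le_trans (haj j hjk) (le_of_lt hs'1)) hs'2
      have hmono := hAmono s' s (le_of_lt hs's) hsfin
      rw [prefCount_succ]
      by_cases hk1 : k ∈ C1
      · rw [if_pos hk1]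
        rcases hkey k with ⟨m, hmlt, hq1, _⟩ | ⟨hq1, _⟩
        · have hpos : 0 < leftLim Q1 (xD k) := (hmemC1 k).mp hk1
          rw [hq1] at hpos
          have hlt : prefCount C1 k < A m := by
            exact_mod_cast (by linarith : (prefCount C1 k : ℝ) < (A m : ℝ))
          have hAm : A m ≤ A s := hAmono m s (le_trans (le_of_lt hmlt) hxks) hsfin
          omega
        · exact absurd ((hmemC1 k).mp hk1) (not_lt.mpr hq1)
      · rw [if_neg hk1]
        omega
  -- the main coupling induction
  have hmain : ∀ n, prefCount C3 n ≤ prefCount C1 n ∧ prefCount C1 n ≤ prefCount C3 n + 1 := by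
    intro n
    induction n with
    | zero => simp [prefCount_zero]
    | succ n IH =>
      obtain ⟨ih1, ih2⟩ := IH
      rw [prefCount_succ, prefCount_succ]
      by_cases h1 : n ∈ C1 <;> by_cases h3 : n ∈ C3
      · rw [if_pos h1, if_pos h3]; omega
      · -- a real departure in Q1, none in Q3 : this forces equality of the counters
        rw [if_pos h1, if_neg h3]
        have hle : prefCount C1 n ≤ prefCount C3 n := by
          by_contra hcon
          have heq : prefCount C1 n = prefCount C3 n + 1 := by omega
          have hq1pos : 0 < leftLim Q1 (xD n) := (hmemC1 n).mp h1
          have hq3pos : 0 < leftLim Q3 (xD n) := by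
            rcases hkey n with ⟨m, _, e1, e3⟩ | ⟨e1, _⟩
            · rw [e3]
              rw [e1] at hq1pos
              have hcast : (prefCount C1 n : ℝ) = (prefCount C3 n : ℝ) + 1 := by
                exact_mod_cast heq
              linarith
            · linarith
          have hsup : ∃ i, Q3 (tA i) = 1 ∧ tA i ≤ xD n ∧ ∀ k' < n, xD k' < tA i := by
            by_contra hns
            exact h3 ((hmemC3 n).mpr ⟨hq3pos, hns⟩)
          obtain ⟨i, hQ3i, hti, hlast⟩ := hsup
          have hset : {j | xD j ≤ tA i ∧ j ∈ C3} = {j | j < n ∧ j ∈ C3} := by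
            ext j
            simp only [Set.mem_setOf_eq, and_congr_left_iff]
            intro hjC
            constructor
            · intro hle'
              have hjn : j ≤ n := by
                by_contra hcon'
                have := hxmono (Nat.lt_of_not_le hcon')
                linarith [le_trans hle' hti]
              rcases Nat.lt_or_ge j n with h | h
              · exact h
              · exact absurd (le_antisymm hjn h ▸ hjC) h3
            · intro hlt'
              exact le_of_lt (hlast j hlt')
          have hQ3eval : Q3 (tA i) = (A (tA i) : ℝ) - (prefCount C3 n : ℝ) := by
            rw [hQ3' (tA i), natCard_eq_prefCount C3 n hset]
          rw [hQ3eval] at hQ3i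
          have hfinti : {m | tA m ≤ tA i}.Finite := by
            by_contra hinf
            rw [hAinf _ hinf] at hQ3i
            have hnn : (0:ℝ) ≤ (prefCount C3 n : ℝ) := Nat.cast_nonneg _
            push_cast at hQ3i
            linarith
          have hAti : A (tA i) = prefCount C3 n + 1 := by
            have : (A (tA i) : ℝ) = (prefCount C3 n : ℝ) + 1 := by linarith
            exact_mod_cast this
          obtain ⟨a, ha1, ha2, haj⟩ : ∃ a, a < xD n ∧ a < tA i ∧ ∀ j, j < n → xD j ≤ a := by
            cases n with
            | zero => exact ⟨0, hxpos 0, htpos i, fun j hj' => absurd hj' (Nat.not_lt_zero j)⟩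
            | succ n' => exact ⟨xD n', hxmono (Nat.lt_succ_self n'),
                hlast n' (Nat.lt_succ_self n'),
                fun j hj' => hxmono.monotone (Nat.lt_succ_iff.mp hj')⟩
          have hamin : a < min (tA i) (xD n) := lt_min ha2 ha1
          set s' : ℝ := (a + min (tA i) (xD n)) / 2 with hs'def
          have hs'a : a < s' := by rw [hs'def]; linarith
          have hs'min : s' < min (tA i) (xD n) := by rw [hs'def]; linarith
          have hs'ti : s' < tA i := lt_of_lt_of_le hs'min (min_le_left _ _)
          have hs'x : s' < xD n := lt_of_lt_of_le hs'min (min_le_right _ _)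
          have hfins' : {m | tA m ≤ s'}.Finite :=
            hfinti.subset (fun m hm => le_trans hm (le_of_lt hs'ti))
          have hc1 := hL1 n s' hfins' (fun j hj' => le_trans (haj j hj') (le_of_lt hs'a)) hs'x
          have hsub : {m | tA m ≤ s'} ⊆ {m | tA m ≤ tA i} \ {i} := by
            intro m hm
            refine ⟨le_trans hm (le_of_lt hs'ti), fun hmi => ?_⟩
            rw [Set.mem_singleton_iff] at hmi
            subst hmi
            exact absurd hm (not_le.mpr hs'ti)
          have hAs' : A s' ≤ prefCount C3 n := by
            have step1 : A s' ≤ ({m | tA m ≤ tA i} \ {i}).ncard := by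
              rw [hA s', Nat.card_coe_set_eq]
              exact Set.ncard_le_ncard hsub hfinti.diff
            have step2 : ({m | tA m ≤ tA i} \ {i}).ncard = A (tA i) - 1 := by
              rw [Set.ncard_diff_singleton_of_mem (show i ∈ {m | tA m ≤ tA i} from le_refl (tA i)),
                hA (tA i), Nat.card_coe_set_eq]
            omega
          omega
        omega
      · -- departure in Q3 but not in Q1 : impossible unless the counters differ
        rw [if_neg h1, if_pos h3]
        have hlt : prefCount C3 n < prefCount C1 n := by
          by_contra hcon
          have heq : prefCount C1 n = prefCount C3 n := by omega
          have hq3pos : 0 < leftLim Q3 (xD n) := ((hmemC3 n).mp h3).1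
          rcases hkey n with ⟨m, _, e1, e3⟩ | ⟨_, e3⟩
          · have hq1pos : 0 < leftLim Q1 (xD n) := by
              rw [e1, heq]
              rw [e3] at hq3pos
              exact_mod_cast hq3pos
            exact h1 ((hmemC1 n).mpr hq1pos)
          · linarith
        omega
      · rw [if_neg h1, if_neg h3]; omega
  -- conclusion
  intro t ht
  have hdiff : Q3 t - Q1 t =
      (Nat.card {k | xD k ≤ t ∧ k ∈ C1} : ℝ) - (Nat.card {k | xD k ≤ t ∧ k ∈ C3} : ℝ) := by
    rw [hQ1' t, hQ3' t]; ring
  by_cases hK : ∃ K, t < xD K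
  · set n := Nat.find hK with hndef
    have hn : t < xD n := Nat.find_spec hK
    have hmin : ∀ m, m < n → xD m ≤ t := fun m hm => not_lt.mp (Nat.find_min hK hm)
    have hs1 : {k | xD k ≤ t ∧ k ∈ C1} = {k | k < n ∧ k ∈ C1} := by
      ext k
      simp only [Set.mem_setOf_eq, and_congr_left_iff]
      intro _
      constructor
      · intro hk
        by_contra hcon
        exact absurd (le_trans (hxmono.monotone (Nat.not_lt.mp hcon)) hk) (not_le.mpr hn)
      · exact hmin k
    have hs3 : {k | xD k ≤ t ∧ k ∈ C3} = {k | k < n ∧ k ∈ C3} := by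
      ext k
      simp only [Set.mem_setOf_eq, and_congr_left_iff]
      intro _
      constructor
      · intro hk
        by_contra hcon
        exact absurd (le_trans (hxmono.monotone (Nat.not_lt.mp hcon)) hk) (not_le.mpr hn)
      · exact hmin k
    rw [hdiff, natCard_eq_prefCount C1 n hs1, natCard_eq_prefCount C3 n hs3]
    obtain ⟨h1, h2⟩ := hmain n
    constructor
    · have := (Nat.cast_le (α := ℝ)).mpr h1
      linarith
    · have := (Nat.cast_le (α := ℝ)).mpr h2
      push_cast at this
      linarith
  · push_neg at hK
    have hs1 : {k | xD k ≤ t ∧ k ∈ C1} = C1 := by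
      ext k; simp only [Set.mem_setOf_eq, and_iff_right_iff_imp]; intro _; exact hK k
    have hs3 : {k | xD k ≤ t ∧ k ∈ C3} = C3 := by
      ext k; simp only [Set.mem_setOf_eq, and_iff_right_iff_imp]; intro _; exact hK k
    rw [hdiff, hs1, hs3]
    by_cases hC1 : C1.Finite
    · have hC3 : C3.Finite := by
        by_contra hC3
        obtain ⟨n, hn⟩ := prefCount_unbounded C3 (hC3) (C1.ncard + 1)
        have h2 := (hmain n).1
        have h3 := prefCount_le C1 hC1 n
        omega
      obtain ⟨N1, hN1⟩ := prefCount_eventually C1 hC1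
      obtain ⟨N3, hN3⟩ := prefCount_eventually C3 hC3
      have e1 : Nat.card C1 = prefCount C1 (max N1 N3) := by
        rw [Nat.card_coe_set_eq, hN1 _ (le_max_left _ _)]
      have e3 : Nat.card C3 = prefCount C3 (max N1 N3) := by
        rw [Nat.card_coe_set_eq, hN3 _ (le_max_right _ _)]
      rw [e1, e3]
      obtain ⟨h1, h2⟩ := hmain (max N1 N3)
      constructor
      · have := (Nat.cast_le (α := ℝ)).mpr h1
        linarith
      · have := (Nat.cast_le (α := ℝ)).mpr h2
        push_cast at this
        linarith
    · have hC3 : ¬ C3.Finite := by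
        intro hC3
        obtain ⟨n, hn⟩ := prefCount_unbounded C1 (hC1) (C3.ncard + 2)
        have h2 := (hmain n).2
        have h3 := prefCount_le C3 hC3 n
        omega
      rw [@Nat.card_eq_zero_of_infinite _ (Set.Infinite.to_subtype hC1),
        @Nat.card_eq_zero_of_infinite _ (Set.Infinite.to_subtype hC3)]
      norm_num
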